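/- Distinguishing, with error probability at most δ ≤ 1/16, between a coin with heads probability 1/2 and a coin with heads probability 1/2 − ε requires at least (1/(4ε²))·ln(1/(8e√π·δ)) independent samples. -/

import Mathlib

open MeasureTheory

private lemma pi_integral_eq' (ℓ : ℕ) (q : PMF Bool) (f : (Fin ℓ → Bool) → ℝ) :
    ∫ s, f s ∂(Measure.pi fun _ : Fin ℓ => q.toMeasure)
      = ∑ s : Fin ℓ → Bool, (∏ i, (q (s i)).toReal) * f s := by
  rw [integral_fintype .of_finite]
  refine Finset.sum_congr rfl fun s _ => ?_
  simp only [Measure.real]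
  rw [show ({s} : Set (Fin ℓ → Bool)) = Set.univ.pi fun i => {s i} from
    (Set.univ_pi_singleton s).symm, Measure.pi_pi]
  simp [PMF.toMeasure_apply_singleton _ _ (measurableSet_singleton _), ENNReal.toReal_prod,
    smul_eq_mul]

private lemma sqrt_prod' {ι : Type*} (t : Finset ι) (c : ι → ℝ) (hc : ∀ i, 0 ≤ c i) :
    Real.sqrt (∏ i ∈ t, c i) = ∏ i ∈ t, Real.sqrt (c i) := by
  classical
  induction t using Finset.induction with
  | empty => simp
  | insert _ _ h ih =>
    rw [Finset.prod_insert h, Finset.prod_insert h, Real.sqrt_mul (hc _), ih]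

set_option maxHeartbeats 1000000 in
/-- Distinguishing, with error probability at most `δ ≤ 1/16`, a coin with heads
probability `1/2 - ε` from a fair coin requires at least
`(1/(4ε²))·ln(1/(8e√π·δ))` independent samples. A (randomized) distinguisher on `ℓ`
samples is a function `g` giving, for each sample sequence, the probability of declaring
"biased coin"; its error is at most `δ` under both product distributions. -/
theorem stmt18 (ε δ : ℝ) (hε0 : 0 < ε) (hε1 : ε < 1 / 4) (hδ0 : 0 < δ) (hδ : δ ≤ 1 / 16)
    (ℓ : ℕ) (g : (Fin ℓ → Bool) → ℝ) (hg : ∀ s, g s ∈ Set.Icc (0 : ℝ) 1)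
    (hmeas : Measurable g)
    (hX : ∫ s, (1 - g s)
        ∂(Measure.pi fun _ : Fin ℓ =>
          (PMF.bernoulli (Real.toNNReal (1 / 2 - ε))
            (by
              apply Real.toNNReal_le_one.mpr
              linarith)).toMeasure) ≤ δ)
    (hY : ∫ s, g s
        ∂(Measure.pi fun _ : Fin ℓ =>
          (PMF.bernoulli (1 / 2) (by norm_num)).toMeasure) ≤ δ) :
    1 / (4 * ε ^ 2) * Real.log (1 / (8 * Real.exp 1 * Real.sqrt Real.pi * δ)) ≤ ℓ := by
  have hp0 : (0:ℝ) ≤ 1/2 - ε := by linarith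
  have hε2 : ε^2 ≤ 1/16 := by nlinarith
  set w1 : (Fin ℓ → Bool) → ℝ := fun s => ∏ i, (if s i then 1/2 - ε else 1/2 + ε) with hw1def
  set w2 : (Fin ℓ → Bool) → ℝ := fun s => ∏ _i : Fin ℓ, (1/2 : ℝ) with hw2def
  rw [pi_integral_eq'] at hX hY
  have ha : ∀ b : Bool, ((PMF.bernoulli (Real.toNNReal (1 / 2 - ε))
      (by apply Real.toNNReal_le_one.mpr; linarith)) b).toReal
      = if b then 1/2 - ε else 1/2 + ε := by
    have key : (1:ENNReal) - ENNReal.ofReal (1/2 - ε) = ENNReal.ofReal (1/2 + ε) := by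
      rw [← ENNReal.ofReal_one, ← ENNReal.ofReal_sub _ hp0]
      congr 1; ring
    intro b
    cases b
    · rw [PMF.bernoulli_apply]
      show ((1:ENNReal) - ENNReal.ofReal (1/2 - ε)).toReal = _
      rw [key, ENNReal.toReal_ofReal (by linarith)]
      simp
    · rw [PMF.bernoulli_apply]
      show (ENNReal.ofReal (1/2 - ε)).toReal = _
      rw [ENNReal.toReal_ofReal hp0]
      simp
  have hb : ∀ b : Bool, ((PMF.bernoulli (1/2 : NNReal) (by norm_num)) b).toReal = (1/2 : ℝ) := by
    intro b; cases b <;> simp [PMF.bernoulli_apply]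
  have hX' : ∑ s : Fin ℓ → Bool, w1 s * (1 - g s) ≤ δ := by
    refine le_trans (le_of_eq ?_) hX
    exact Finset.sum_congr rfl fun s _ => by simp only [hw1def, ha]
  have hY' : ∑ s : Fin ℓ → Bool, w2 s * g s ≤ δ := by
    refine le_trans (le_of_eq ?_) hY
    exact Finset.sum_congr rfl fun s _ => by simp only [hw2def, hb]
  have hw1 : ∀ s, 0 ≤ w1 s := fun s =>
    Finset.prod_nonneg fun i _ => by by_cases h : s i <;> simp [h] <;> linarith
  have hw2 : ∀ s, 0 ≤ w2 s := fun s => Finset.prod_nonneg fun i _ => by norm_num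
  have sum1 : ∑ s : Fin ℓ → Bool, w1 s = 1 := by
    have h : (∏ _i : Fin ℓ, ∑ b : Bool, (if b then (1/2 - ε : ℝ) else 1/2 + ε))
        = ∑ s : Fin ℓ → Bool, ∏ i, (if s i then (1/2 - ε : ℝ) else 1/2 + ε) := by
      rw [← Fintype.piFinset_univ]
      exact Finset.prod_univ_sum _ _
    simp only [hw1def]
    rw [← h]
    simp
    norm_num
  have sum2 : ∑ s : Fin ℓ → Bool, w2 s = 1 := by
    have h : (∏ _i : Fin ℓ, ∑ _b : Bool, (1/2 : ℝ))
        = ∑ s : Fin ℓ → Bool, ∏ _i : Fin ℓ, (1/2 : ℝ) := by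
      rw [← Fintype.piFinset_univ]
      exact Finset.prod_univ_sum _ _
    simp only [hw2def]
    rw [← h]
    simp
  have hmin : ∑ s : Fin ℓ → Bool, min (w1 s) (w2 s) ≤ 2 * δ := by
    have step : ∀ s : Fin ℓ → Bool, min (w1 s) (w2 s) ≤ w1 s * (1 - g s) + w2 s * g s := by
      intro s
      obtain ⟨hg0, hg1⟩ := hg s
      have h1 := min_le_left (w1 s) (w2 s)
      have h2 := min_le_right (w1 s) (w2 s)
      nlinarith [hw1 s, hw2 s]
    calc ∑ s : Fin ℓ → Bool, min (w1 s) (w2 s)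
        ≤ ∑ s : Fin ℓ → Bool, (w1 s * (1 - g s) + w2 s * g s) :=
          Finset.sum_le_sum fun s _ => step s
      _ = (∑ s : Fin ℓ → Bool, w1 s * (1 - g s)) + ∑ s : Fin ℓ → Bool, w2 s * g s :=
          Finset.sum_add_distrib
      _ ≤ 2 * δ := by linarith
  set B : ℝ := Real.sqrt ((1/2 - ε) * (1/2)) + Real.sqrt ((1/2 + ε) * (1/2)) with hBdef
  have hB0 : 0 ≤ B := by positivity
  have hBC : ∑ s : Fin ℓ → Bool, Real.sqrt (w1 s * w2 s) = B ^ ℓ := by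
    have key : ∀ s : Fin ℓ → Bool, Real.sqrt (w1 s * w2 s)
        = ∏ i, Real.sqrt ((if s i then 1/2 - ε else 1/2 + ε) * (1/2)) := by
      intro s
      simp only [hw1def, hw2def]
      rw [← Finset.prod_mul_distrib, sqrt_prod']
      intro i
      by_cases h : s i <;> simp [h] <;> linarith
    have h : (∏ _i : Fin ℓ, ∑ b : Bool, Real.sqrt ((if b then (1/2 - ε : ℝ) else 1/2 + ε) * (1/2)))
        = ∑ s : Fin ℓ → Bool, ∏ i, Real.sqrt ((if s i then (1/2 - ε : ℝ) else 1/2 + ε) * (1/2)) := by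
      rw [← Fintype.piFinset_univ]
      exact Finset.prod_univ_sum _ _
    rw [Finset.sum_congr rfl fun s _ => key s, ← h]
    simp [hBdef, add_comm]
  have hB2 : Real.exp (-(4 * ε ^ 2)) ≤ B ^ 2 := by
    have hs : Real.sqrt ((1/2 - ε) * (1/2)) * Real.sqrt ((1/2 + ε) * (1/2))
        = Real.sqrt (1/4 - ε^2) / 2 := by
      rw [← Real.sqrt_mul (by nlinarith)]
      rw [show ((1/2 - ε) * (1/2)) * ((1/2 + ε) * (1/2)) = (1/4 - ε^2)/4 by ring]
      rw [Real.sqrt_div (by nlinarith)]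
      rw [show (4:ℝ) = 2^2 by norm_num, Real.sqrt_sq (by norm_num)]
    have hBsq : B ^ 2 = 1/2 + Real.sqrt (1/4 - ε^2) := by
      rw [hBdef]
      have e1 : Real.sqrt ((1/2 - ε) * (1/2)) ^ 2 = (1/2 - ε) * (1/2) :=
        Real.sq_sqrt (by nlinarith)
      have e2 : Real.sqrt ((1/2 + ε) * (1/2)) ^ 2 = (1/2 + ε) * (1/2) :=
        Real.sq_sqrt (by nlinarith)
      rw [add_sq, e1, e2, mul_assoc 2, hs]
      ring
    have hsqrt : 1/2 - 2*ε^2 ≤ Real.sqrt (1/4 - ε^2) := by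
      have h4 : (0:ℝ) ≤ ε^2 - 4*ε^4 := by nlinarith [hε2, sq_nonneg ε]
      calc (1/2 - 2*ε^2 : ℝ) = Real.sqrt ((1/2 - 2*ε^2)^2) := by
            rw [Real.sqrt_sq (by nlinarith)]
        _ ≤ Real.sqrt (1/4 - ε^2) := Real.sqrt_le_sqrt (by nlinarith)
    have hexp : Real.exp (-(4 * ε ^ 2)) ≤ 1 - 2*ε^2 := by
      have h1 : 1 + 4*ε^2 ≤ Real.exp (4*ε^2) := by
        have := Real.add_one_le_exp (4*ε^2); linarith
      have h2 : Real.exp (-(4*ε^2)) = 1 / Real.exp (4*ε^2) := by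
        rw [Real.exp_neg]; ring
      rw [h2, div_le_iff₀ (Real.exp_pos _)]
      have hc : (0:ℝ) ≤ 1 - 2*ε^2 := by nlinarith
      have := mul_le_mul_of_nonneg_left h1 hc
      nlinarith [sq_nonneg ε, hε2]
    calc Real.exp (-(4 * ε ^ 2)) ≤ 1 - 2*ε^2 := hexp
      _ = 1/2 + (1/2 - 2*ε^2) := by ring
      _ ≤ 1/2 + Real.sqrt (1/4 - ε^2) := by linarith
      _ = B ^ 2 := hBsq.symm
  have hCS : (B ^ ℓ) ^ 2 ≤ 2 * ∑ s : Fin ℓ → Bool, min (w1 s) (w2 s) := by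
    rw [← hBC]
    have key : ∀ s : Fin ℓ → Bool, Real.sqrt (w1 s * w2 s)
        = Real.sqrt (min (w1 s) (w2 s)) * Real.sqrt (max (w1 s) (w2 s)) := by
      intro s
      rw [← Real.sqrt_mul (le_min (hw1 s) (hw2 s)), min_mul_max]
    rw [Finset.sum_congr rfl fun s _ => key s]
    have cs := Finset.sum_mul_sq_le_sq_mul_sq Finset.univ
      (fun s : Fin ℓ → Bool => Real.sqrt (min (w1 s) (w2 s)))
      (fun s : Fin ℓ → Bool => Real.sqrt (max (w1 s) (w2 s)))
    have e1 : ∑ s : Fin ℓ → Bool, Real.sqrt (min (w1 s) (w2 s)) ^ 2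
        = ∑ s : Fin ℓ → Bool, min (w1 s) (w2 s) :=
      Finset.sum_congr rfl fun s _ => Real.sq_sqrt (le_min (hw1 s) (hw2 s))
    have e2 : ∑ s : Fin ℓ → Bool, Real.sqrt (max (w1 s) (w2 s)) ^ 2
        = ∑ s : Fin ℓ → Bool, max (w1 s) (w2 s) :=
      Finset.sum_congr rfl fun s _ => Real.sq_sqrt (le_trans (hw1 s) (le_max_left _ _))
    have e3 : ∑ s : Fin ℓ → Bool, max (w1 s) (w2 s) ≤ 2 := by
      calc ∑ s : Fin ℓ → Bool, max (w1 s) (w2 s)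
          ≤ ∑ s : Fin ℓ → Bool, (w1 s + w2 s) :=
            Finset.sum_le_sum fun s _ => max_le (by linarith [hw2 s]) (by linarith [hw1 s])
        _ = 2 := by rw [Finset.sum_add_distrib, sum1, sum2]; norm_num
    have hminpos : 0 ≤ ∑ s : Fin ℓ → Bool, min (w1 s) (w2 s) :=
      Finset.sum_nonneg fun s _ => le_min (hw1 s) (hw2 s)
    calc (∑ s : Fin ℓ → Bool, Real.sqrt (min (w1 s) (w2 s)) * Real.sqrt (max (w1 s) (w2 s))) ^ 2
        ≤ (∑ s : Fin ℓ → Bool, Real.sqrt (min (w1 s) (w2 s)) ^ 2)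
          * ∑ s : Fin ℓ → Bool, Real.sqrt (max (w1 s) (w2 s)) ^ 2 := cs
      _ ≤ 2 * ∑ s : Fin ℓ → Bool, min (w1 s) (w2 s) := by
          rw [e1, e2]; nlinarith
  have hmain : Real.exp (-(4 * ε ^ 2 * ℓ)) ≤ 4 * δ := by
    have e1 : Real.exp (-(4 * ε ^ 2 * ℓ)) = Real.exp (-(4 * ε ^ 2)) ^ ℓ := by
      rw [← Real.exp_nat_mul]; ring_nf
    have e2 : Real.exp (-(4 * ε ^ 2)) ^ ℓ ≤ (B ^ 2) ^ ℓ :=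
      pow_le_pow_left₀ (Real.exp_pos _).le hB2 ℓ
    calc Real.exp (-(4 * ε ^ 2 * ℓ)) = Real.exp (-(4 * ε ^ 2)) ^ ℓ := e1
      _ ≤ (B ^ ℓ) ^ 2 := by
          rw [show (B ^ ℓ) ^ 2 = (B ^ 2) ^ ℓ by rw [← pow_mul, ← pow_mul, mul_comm]]
          exact e2
      _ ≤ 2 * ∑ s : Fin ℓ → Bool, min (w1 s) (w2 s) := hCS
      _ ≤ 4 * δ := by linarith
  have hπ1 : (1:ℝ) ≤ Real.sqrt Real.pi := by
    rw [show (1:ℝ) = Real.sqrt 1 by simp]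
    exact Real.sqrt_le_sqrt (by linarith [Real.pi_gt_three])
  have he1 : (1:ℝ) ≤ Real.exp 1 := by linarith [Real.add_one_le_exp 1]
  have hlog : -(4 * ε ^ 2 * ℓ) ≤ Real.log (8 * Real.exp 1 * Real.sqrt Real.pi * δ) := by
    calc -(4 * ε ^ 2 * ℓ) = Real.log (Real.exp (-(4 * ε ^ 2 * ℓ))) := (Real.log_exp _).symm
      _ ≤ Real.log (4 * δ) := Real.log_le_log (Real.exp_pos _) hmain
      _ ≤ Real.log (8 * Real.exp 1 * Real.sqrt Real.pi * δ) := by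
          apply Real.log_le_log (by linarith)
          have h8 : (1:ℝ) ≤ Real.exp 1 * Real.sqrt Real.pi := by nlinarith
          nlinarith
  have hεsq : (0:ℝ) < 4 * ε ^ 2 := by positivity
  rw [one_div (8 * Real.exp 1 * Real.sqrt Real.pi * δ), Real.log_inv]
  rw [one_div (4 * ε ^ 2), inv_mul_eq_div, div_le_iff₀ hεsq]
  nlinarith [hlog]
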